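/- Let N > 255 be a natural number and let K = \lceil \log_2 \log_2 (N+1) \rceil. Then the Bit Length Bounding gate count S_K^{blb}(N) = N/3 + \sum_{\kappa=1}^{K-1} N \cdot (2^{2^{\kappa}}(2^{\kappa}+1) - 2)/(2^{2^{\kappa+1}} - 1), viewed as a real number, satisfies 1.29 N < S_K^{blb}(N) < 1.71 N. -/

import Mathlib

private lemma blb_key (k : ℕ) (hk : 4 ≤ k) : 3*k*(k+1) ≤ 2^(k+2) := by
  induction k, hk using Nat.le_induction with
  | base => norm_num
  | succ k hk ih =>
    have h2 : (2:ℕ)^(k+1+2) = 2 * 2^(k+2) := by ring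
    nlinarith [ih, hk]

private lemma blb_natkey (k : ℕ) (hk : k = 2 ∨ 4 ≤ k) :
    3*k*(k+1)*2^k + 4 ≤ 4*(2^k)^2 + 6*k := by
  rcases hk with rfl | hk
  · norm_num
  · have h1 := blb_key k hk
    have h3 : 3*k*(k+1)*2^k ≤ 2^(k+2)*2^k := Nat.mul_le_mul_right _ h1
    have h4 : (2:ℕ)^(k+2)*2^k = 4*(2^k)^2 := by ring
    omega

private lemma blb_term_bound (κ : ℕ) (hκ : 1 ≤ κ) :
    ((2:ℝ)^2^κ * (2^κ+1) - 2) / ((2:ℝ)^2^(κ+1) - 1) ≤ (4/3) * ((1:ℝ)/2)^κ := by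
  set k : ℕ := 2^κ with hkdef
  have hk2 : 2 ≤ k := by
    calc (2:ℕ) = 2^1 := rfl
    _ ≤ 2^κ := Nat.pow_le_pow_right (by norm_num) hκ
  have hcase : k = 2 ∨ 4 ≤ k := by
    rcases eq_or_lt_of_le hκ with h | h
    · left; rw [hkdef, ← h]; norm_num
    · right
      calc (4:ℕ) = 2^2 := rfl
      _ ≤ 2^κ := Nat.pow_le_pow_right (by norm_num) h
  have hsq : (2:ℝ)^2^(κ+1) = ((2:ℝ)^k)^2 := by
    rw [hkdef, pow_succ, pow_mul]
  have hkr : ((2:ℝ))^κ = (k:ℝ) := by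
    rw [hkdef]; push_cast; ring
  have hxge : (4:ℝ) ≤ (2:ℝ)^k := by
    calc (4:ℝ) = 2^2 := by norm_num
    _ ≤ (2:ℝ)^k := by
      apply pow_le_pow_right₀ (by norm_num) hk2
  have hden : (0:ℝ) < (2:ℝ)^2^(κ+1) - 1 := by
    rw [hsq]; nlinarith
  have hden2 : (0:ℝ) < 3 * (2:ℝ)^κ := by positivity
  have hhalf : (4/3) * ((1:ℝ)/2)^κ = 4 / (3 * (2:ℝ)^κ) := by
    rw [div_pow, one_pow]; ring
  rw [hhalf, div_le_div_iff₀ hden hden2, hsq, hkr]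
  -- cast the nat inequality
  have hnat := blb_natkey k hcase
  have hcast : 3*(k:ℝ)*((k:ℝ)+1)*(2:ℝ)^k + 4 ≤ 4*((2:ℝ)^k)^2 + 6*(k:ℝ) := by
    exact_mod_cast hnat
  have hkpos : (2:ℝ) ≤ (k:ℝ) := by exact_mod_cast hk2
  nlinarith [hcast, hkpos, hxge]

private lemma blb_term_nonneg (κ : ℕ) (hκ : 1 ≤ κ) :
    0 ≤ ((2:ℝ)^2^κ * (2^κ+1) - 2) / ((2:ℝ)^2^(κ+1) - 1) := by
  have h1 : (4:ℝ) ≤ (2:ℝ)^2^κ := by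
    calc (4:ℝ) = 2^2 := by norm_num
    _ ≤ (2:ℝ)^2^κ := by
      apply pow_le_pow_right₀ (by norm_num)
      calc 2 = 2^1 := rfl
      _ ≤ 2^κ := Nat.pow_le_pow_right (by norm_num) hκ
  have h2 : (1:ℝ) ≤ (2:ℝ)^κ := one_le_pow₀ (by norm_num)
  have h3 : (4:ℝ) ≤ (2:ℝ)^2^(κ+1) := by
    calc (4:ℝ) = 2^2 := by norm_num
    _ ≤ (2:ℝ)^2^(κ+1) := by
      apply pow_le_pow_right₀ (by norm_num)
      calc (2:ℕ) = 2^1 := rfl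
      _ ≤ 2^(κ+1) := Nat.pow_le_pow_right (by norm_num) (by omega)
  apply div_nonneg <;> nlinarith

private lemma blb_geom (m : ℕ) :
    ∑ κ ∈ Finset.Icc 1 m, ((1:ℝ)/2)^κ = 1 - ((1:ℝ)/2)^m := by
  induction m with
  | zero => simp
  | succ m ih =>
    rw [Finset.sum_Icc_succ_top (by omega : 1 ≤ m+1), ih, pow_succ]
    ring

/-- For `N > 255` and `K = ⌈log₂ log₂ (N + 1)⌉`, the Bit Length Bounding gate
count satisfies `1.29 N < S_K^{blb}(N) < 1.71 N`. -/
theorem blb_gate_count_bounds (N : ℕ) (hN : 255 < N)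
    (K : ℕ) (hK : K = Nat.clog 2 (Nat.clog 2 (N + 1))) :
    1.29 * (N : ℝ)
        < (N : ℝ) / 3 + ∑ κ ∈ Finset.Icc 1 (K - 1),
            (N : ℝ) * ((2 : ℝ) ^ 2 ^ κ * (2 ^ κ + 1) - 2) / ((2 : ℝ) ^ 2 ^ (κ + 1) - 1) ∧
    (N : ℝ) / 3 + ∑ κ ∈ Finset.Icc 1 (K - 1),
        (N : ℝ) * ((2 : ℝ) ^ 2 ^ κ * (2 ^ κ + 1) - 2) / ((2 : ℝ) ^ 2 ^ (κ + 1) - 1)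
      < 1.71 * (N : ℝ) := by
  have hNpos : (0:ℝ) < (N:ℝ)  := by exact_mod_cast (by omega : 0 < N)
  have hK4 : 4 ≤ K := by
    have h1 : (2:ℕ)^8 < N+1 := by omega
    have h2 : 8 < Nat.clog 2 (N+1) := (Nat.lt_clog_iff_pow_lt (by norm_num)).mpr h1
    have h3 : (2:ℕ)^3 < Nat.clog 2 (N+1) := by norm_num; omega
    have h4 : 3 < Nat.clog 2 (Nat.clog 2 (N+1)) :=
      (Nat.lt_clog_iff_pow_lt (by norm_num)).mpr h3
    omega
  set S := ∑ κ ∈ Finset.Icc 1 (K - 1),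
      (N : ℝ) * ((2 : ℝ) ^ 2 ^ κ * (2 ^ κ + 1) - 2) / ((2 : ℝ) ^ 2 ^ (κ + 1) - 1) with hS
  have hterm : ∀ κ, (N : ℝ) * ((2 : ℝ) ^ 2 ^ κ * (2 ^ κ + 1) - 2) / ((2 : ℝ) ^ 2 ^ (κ + 1) - 1)
      = (N:ℝ) * (((2 : ℝ) ^ 2 ^ κ * (2 ^ κ + 1) - 2) / ((2 : ℝ) ^ 2 ^ (κ + 1) - 1)) := by
    intro κ; rw [mul_div_assoc]
  constructor
  · -- lower bound
    have hsub : Finset.Icc 1 2 ⊆ Finset.Icc 1 (K-1) :=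
      Finset.Icc_subset_Icc_right (by omega)
    have hlow : ∑ κ ∈ Finset.Icc 1 2,
        (N : ℝ) * ((2 : ℝ) ^ 2 ^ κ * (2 ^ κ + 1) - 2) / ((2 : ℝ) ^ 2 ^ (κ + 1) - 1) ≤ S := by
      apply Finset.sum_le_sum_of_subset_of_nonneg hsub
      intro i hi _
      rw [hterm]
      have hi1 : 1 ≤ i := (Finset.mem_Icc.mp hi).1
      exact mul_nonneg (le_of_lt hNpos) (blb_term_nonneg i hi1)
    have hval : ∑ κ ∈ Finset.Icc 1 2,
        (N : ℝ) * ((2 : ℝ) ^ 2 ^ κ * (2 ^ κ + 1) - 2) / ((2 : ℝ) ^ 2 ^ (κ + 1) - 1)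
        = (N:ℝ) * (2/3) + (N:ℝ) * (26/85) := by
      rw [show Finset.Icc 1 2 = ({1, 2} : Finset ℕ) from rfl]
      rw [Finset.sum_insert (by norm_num), Finset.sum_singleton]
      norm_num
      ring
    rw [hval] at hlow
    nlinarith [hlow, hNpos]
  · -- upper bound
    have hup : S ≤ (N:ℝ) * (4/3) * ∑ κ ∈ Finset.Icc 1 (K-1), ((1:ℝ)/2)^κ := by
      rw [Finset.mul_sum]
      apply Finset.sum_le_sum
      intro i hi
      have hi1 : 1 ≤ i := (Finset.mem_Icc.mp hi).1
      rw [hterm]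
      calc (N:ℝ) * (((2 : ℝ) ^ 2 ^ i * (2 ^ i + 1) - 2) / ((2 : ℝ) ^ 2 ^ (i + 1) - 1))
          ≤ (N:ℝ) * ((4/3) * ((1:ℝ)/2)^i) :=
            mul_le_mul_of_nonneg_left (blb_term_bound i hi1) (le_of_lt hNpos)
        _ = (N:ℝ) * (4/3) * ((1:ℝ)/2)^i := by ring
    rw [blb_geom] at hup
    have hp : (0:ℝ) < ((1:ℝ)/2)^(K-1) := by positivity
    nlinarith [hup, hNpos, hp]
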